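/- If a_{k,i} denotes the number of atomic set partitions of size k with i parts, then as formal power series in t and q: 1/(1 - \sum_{k\ge 1} \sum_{i=1}^{k} a_{k,i} t^i q^k) = \sum_{n\ge 0} \sum_{r\ge 0} S_{n,r} t^r q^n, where S_{n,r} is the number of set partitions of [n] into r parts. -/

import Mathlib

open scoped Classical
noncomputable section

/-- The ground set `[n] = {1, …, n}`. -/
def ground (n : ℕ) : Finset ℕ := Finset.Icc 1 n

/-- `A` is a set partition of `[n]`. -/
def IsSetPartition (n : ℕ) (A : Finset (Finset ℕ)) : Prop :=
  (∀ B ∈ A, B.Nonempty) ∧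
  (∀ B ∈ A, ∀ C ∈ A, B ≠ C → Disjoint B C) ∧
  A.sup id = ground n

/-- Shift every entry of every part by `n`. -/
def shiftP (n : ℕ) (A : Finset (Finset ℕ)) : Finset (Finset ℕ) :=
  A.image (fun B => B.image (· + n))

/-- Shifted concatenation `A|B` of a set partition `A ⊢ [n]` with `B`. -/
def concatP (n : ℕ) (A B : Finset (Finset ℕ)) : Finset (Finset ℕ) :=
  A ∪ shiftP n B

/-- `A` is an atomic set partition of `[n]`: nonempty and not a nontrivial
shifted concatenation. -/
def AtomicP (n : ℕ) (A : Finset (Finset ℕ)) : Prop :=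
  IsSetPartition n A ∧ 0 < n ∧
  ¬ ∃ k B C, 0 < k ∧ k < n ∧ IsSetPartition k B ∧ IsSetPartition (n - k) C ∧
      A = concatP k B C

/-- Shifted concatenation of a list of (size, set partition) pairs. -/
def concatListP : List (ℕ × Finset (Finset ℕ)) → ℕ × Finset (Finset ℕ)
  | [] => (0, ∅)
  | p :: L => ((concatListP L).1 + p.1, concatP p.1 p.2 (concatListP L).2)

/-- `L` is the atomic factorization `A^!` of the set partition `A ⊢ [n]`. -/
def AtomicFactorization (n : ℕ) (A : Finset (Finset ℕ))
    (L : List (ℕ × Finset (Finset ℕ))) : Prop :=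
  (∀ p ∈ L, AtomicP p.1 p.2) ∧ concatListP L = (n, A)

/-- The Bell number: the number of set partitions of `[n]`. -/
def bell (n : ℕ) : ℕ := Nat.card {A : Finset (Finset ℕ) // IsSetPartition n A}

/-- Stirling numbers of the second kind: set partitions of `[n]` into `k` parts. -/
def stirling2 (n k : ℕ) : ℕ :=
  Nat.card {A : Finset (Finset ℕ) // IsSetPartition n A ∧ A.card = k}

/-- The number of atomic set partitions of `[n]` into `k` parts. -/
def atomCount (n k : ℕ) : ℕ :=
  Nat.card {A : Finset (Finset ℕ) // AtomicP n A ∧ A.card = k}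

/-- The number of atomic set partitions of `[n]`. -/
def atomCount' (n : ℕ) : ℕ := Nat.card {A : Finset (Finset ℕ) // AtomicP n A}

/-- Refinement order: `A ≤ B` iff every part of `A` is contained in a part of `B`. -/
def refines (A B : Finset (Finset ℕ)) : Prop := ∀ a ∈ A, ∃ b ∈ B, a ⊆ b

/-- The meet `A ∧ B` of two set partitions. -/
def meetP (A B : Finset (Finset ℕ)) : Finset (Finset ℕ) :=
  ((A ×ˢ B).image fun p => p.1 ∩ p.2).filter (·.Nonempty)

/-- The set partition `{[n]}` with a single part (empty if `n = 0`). -/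
def onePartP (n : ℕ) : Finset (Finset ℕ) := if n = 0 then ∅ else {ground n}

/-- The finite set of set partitions of `[n]` satisfying a predicate `P`. -/
def SPs (n : ℕ) (P : Finset (Finset ℕ) → Prop) : Finset (Finset (Finset ℕ)) :=
  (ground n).powerset.powerset.filter fun A => IsSetPartition n A ∧ P A

/-- Covering relation for `≤_*`: `B` covers `A` if `B` is obtained from `A` by merging two
parts `a, a'` with every element of `a` smaller than every element of `a'`. -/
def coverStar (A B : Finset (Finset ℕ)) : Prop :=
  ∃ a ∈ A, ∃ a' ∈ A, a ≠ a' ∧ (∀ x ∈ a, ∀ y ∈ a', x < y) ∧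
    B = insert (a ∪ a') ((A.erase a).erase a')

/-- The order `≤_*` on set partitions. -/
def leStar : Finset (Finset ℕ) → Finset (Finset ℕ) → Prop :=
  Relation.ReflTransGen coverStar

/-- Restriction `A↓_S` of a set partition to the entries in `S`. -/
def restrictP (A : Finset (Finset ℕ)) (S : Finset ℕ) : Finset (Finset ℕ) :=
  (A.image (· ∩ S)).filter (·.Nonempty)

/-- The standardization map of a finite set `S`: sends the `i`-th smallest element of `S`
to `i` (1-indexed). -/
def stMap (S : Finset ℕ) (x : ℕ) : ℕ := (S.filter (· ≤ x)).card

/-- Standardization of a set partition: relabel its entries to `{1,…,m}` preserving order. -/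
def stdP (A : Finset (Finset ℕ)) : Finset (Finset ℕ) :=
  A.image fun b => b.image (stMap (A.sup id))

/-- The map raising `{1,…,|S|}` order-preservingly onto `S`. -/
def raiseMap (S : Finset ℕ) (x : ℕ) : ℕ := (S.sort (· ≤ ·)).getD (x - 1) 0

/-- `A↑_S`: raise the entries of `A` order-preservingly so the ground set becomes `S`. -/
def raiseP (S : Finset ℕ) (A : Finset (Finset ℕ)) : Finset (Finset ℕ) :=
  A.image fun b => b.image (raiseMap S)

/-- `IsShuffle l₁ l₂ l`: `l` is a shuffle (interleaving) of `l₁` and `l₂`. -/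
inductive IsShuffle {α : Type*} : List α → List α → List α → Prop
  | nil : IsShuffle [] [] []
  | left {a : α} {l₁ l₂ l : List α} : IsShuffle l₁ l₂ l → IsShuffle (a :: l₁) l₂ (a :: l)
  | right {a : α} {l₁ l₂ l : List α} : IsShuffle l₁ l₂ l → IsShuffle l₁ (a :: l₂) (a :: l)

/-- A word is Lyndon if it is nonempty and lexicographically strictly smaller than all of
its proper cyclic rotations. -/
def LyndonWord {α : Type*} (lt : α → α → Prop) (w : List α) : Prop :=
  w ≠ [] ∧ ∀ i, 0 < i → i < w.length → List.Lex lt w (w.rotate i)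

/-- A set partition is Lyndon (with respect to a total order `lt` on atomic set partitions)
if its atomic factorization is a Lyndon word. -/
def LyndonPartition (lt : ℕ × Finset (Finset ℕ) → ℕ × Finset (Finset ℕ) → Prop)
    (n : ℕ) (A : Finset (Finset ℕ)) : Prop :=
  ∃ L, AtomicFactorization n A L ∧ LyndonWord lt L

/-! ### Set compositions -/

/-- `Φ` is a set composition of `[n]`: an ordered sequence of nonempty pairwise disjoint
sets whose union is `[n]`. -/
def IsSetComposition (n : ℕ) (Φ : List (Finset ℕ)) : Prop :=
  (∀ B ∈ Φ, B.Nonempty) ∧ Φ.Pairwise Disjoint ∧ Φ.foldr (· ∪ ·) ∅ = ground n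

/-- Shift every entry of every part of a set composition by `n`. -/
def shiftC (n : ℕ) (Φ : List (Finset ℕ)) : List (Finset ℕ) :=
  Φ.map (·.image (· + n))

/-- Shifted concatenation `Φ|Ψ` of set compositions, `Φ ⊨ [n]`. -/
def concatC (n : ℕ) (Φ Ψ : List (Finset ℕ)) : List (Finset ℕ) := Φ ++ shiftC n Ψ

/-- An atomic set composition: nonempty and not a nontrivial shifted concatenation. -/
def AtomicC (n : ℕ) (Φ : List (Finset ℕ)) : Prop :=
  IsSetComposition n Φ ∧ 0 < n ∧
  ¬ ∃ k Ψ Γ, 0 < k ∧ k < n ∧ IsSetComposition k Ψ ∧ IsSetComposition (n - k) Γ ∧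
      Φ = concatC k Ψ Γ

/-- Shifted concatenation of a list of (size, set composition) pairs. -/
def concatListC : List (ℕ × List (Finset ℕ)) → ℕ × List (Finset ℕ)
  | [] => (0, [])
  | p :: L => ((concatListC L).1 + p.1, concatC p.1 p.2 (concatListC L).2)

/-- `L` is the atomic factorization `Φ^!` of the set composition `Φ ⊨ [n]`. -/
def AtomicFactorizationC (n : ℕ) (Φ : List (Finset ℕ))
    (L : List (ℕ × List (Finset ℕ))) : Prop :=
  (∀ p ∈ L, AtomicC p.1 p.2) ∧ concatListC L = (n, Φ)

/-- Covering relation for `≤_*` on set compositions: merge two adjacent parts `a, b` with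
every element of `a` smaller than every element of `b`. -/
def coverStarC (Φ Ψ : List (Finset ℕ)) : Prop :=
  ∃ L₁ a b L₂, Φ = L₁ ++ a :: b :: L₂ ∧ (∀ x ∈ a, ∀ y ∈ b, x < y) ∧
    Ψ = L₁ ++ (a ∪ b) :: L₂

/-- The order `≤_*` on set compositions. -/
def leStarC : List (Finset ℕ) → List (Finset ℕ) → Prop :=
  Relation.ReflTransGen coverStarC

/-- The meet operation `Φ ∧ Ψ` on set compositions: the nonempty intersections
`Φ_i ∩ Ψ_j` in lexicographic order of `(i, j)`. -/
def meetC (Φ Ψ : List (Finset ℕ)) : List (Finset ℕ) :=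
  (Φ.flatMap fun a => Ψ.map fun b => a ∩ b).filter (·.Nonempty)

/-- The one-part set composition `([n])` (empty if `n = 0`). -/
def onePartC (n : ℕ) : List (Finset ℕ) := if n = 0 then [] else [ground n]

/-- Lists of length `k` with all entries in `s`. -/
def listsOfLen (s : Finset (Finset ℕ)) : ℕ → Finset (List (Finset ℕ))
  | 0 => {[]}
  | k + 1 => (s ×ˢ listsOfLen s k).image fun p => p.1 :: p.2

/-- The finite set of set compositions of `[n]` satisfying a predicate `P`. -/
def SCs (n : ℕ) (P : List (Finset ℕ) → Prop) : Finset (List (Finset ℕ)) :=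
  ((Finset.range (n + 1)).biUnion fun k => listsOfLen (ground n).powerset k).filter
    fun Φ => IsSetComposition n Φ ∧ P Φ

/-- `Φ↑_S`: raise the entries of a set composition order-preservingly into `S`. -/
def raiseC (S : Finset ℕ) (Φ : List (Finset ℕ)) : List (Finset ℕ) :=
  Φ.map (·.image (raiseMap S))

/-- Standardization of a set composition. -/
def stdC (Φ : List (Finset ℕ)) : List (Finset ℕ) :=
  Φ.map (·.image (stMap (Φ.foldr (· ∪ ·) ∅)))

/-- `α(Φ)`: the composition of part sizes of `Φ`. -/
def alphaC (Φ : List (Finset ℕ)) : List ℕ := Φ.map Finset.card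

/-- The order `≤_#` on set compositions: `Φ ≤_# Ψ` iff `α(Φ) = α(Ψ)` and each atomic factor
of `Φ` is the standardization of the corresponding consecutive block of parts of `Ψ`. -/
def leSharp (Φ Ψ : List (Finset ℕ)) : Prop :=
  alphaC Φ = alphaC Ψ ∧
  ∃ (L : List (ℕ × List (Finset ℕ))) (Bs : List (List (Finset ℕ))),
    (∀ p ∈ L, AtomicC p.1 p.2) ∧ (concatListC L).2 = Φ ∧
    Ψ = Bs.flatten ∧ List.Forall₂ (fun b (l : ℕ × List (Finset ℕ)) => stdC b = l.2) Bs L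

/-! ### Index types -/

/-- Set partitions with their sizes. -/
abbrev SPIdx := {x : ℕ × Finset (Finset ℕ) // IsSetPartition x.1 x.2}

/-- Atomic set partitions with their sizes. -/
abbrev AtomIdx := {x : ℕ × Finset (Finset ℕ) // AtomicP x.1 x.2}

/-- Set compositions with their sizes. -/
abbrev SCIdx := {x : ℕ × List (Finset ℕ) // IsSetComposition x.1 x.2}

/-- Atomic set compositions with their sizes. -/
abbrev AtomCIdx := {x : ℕ × List (Finset ℕ) // AtomicC x.1 x.2}

section AuxProof
open Finset

lemma mem_ground' {n x : ℕ} : x ∈ ground n ↔ 1 ≤ x ∧ x ≤ n := Finset.mem_Icc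

lemma part_subset_ground {n : ℕ} {A : Finset (Finset ℕ)} (h : IsSetPartition n A)
    {B : Finset ℕ} (hB : B ∈ A) : B ⊆ ground n := by
  have := Finset.le_sup (f := id) hB
  rw [h.2.2] at this; exact this

lemma exists_block {n : ℕ} {A : Finset (Finset ℕ)} (h : IsSetPartition n A)
    {x : ℕ} (hx : x ∈ ground n) : ∃ B ∈ A, x ∈ B := by
  rw [← h.2.2] at hx
  simpa using (Finset.mem_sup.mp hx)

/-- `k` is a breakpoint of `A`: every block lies in `[1,k]` or in `(k,∞)`. -/
def IsBreak (k : ℕ) (A : Finset (Finset ℕ)) : Prop :=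
  ∀ B ∈ A, B ⊆ ground k ∨ ∀ x ∈ B, k < x

def firstPart (k : ℕ) (A : Finset (Finset ℕ)) : Finset (Finset ℕ) :=
  A.filter (· ⊆ ground k)

def restPart (k : ℕ) (A : Finset (Finset ℕ)) : Finset (Finset ℕ) :=
  (A.filter fun B => ¬ B ⊆ ground k).image fun B => B.image (· - k)

lemma shift_block_mem {k : ℕ} {C : Finset (Finset ℕ)} {D : Finset ℕ} :
    D ∈ shiftP k C ↔ ∃ B ∈ C, D = B.image (· + k) := by
  simp [shiftP, eq_comm]

lemma concatP_isSetPartition {k m : ℕ} {B C : Finset (Finset ℕ)}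
    (hB : IsSetPartition k B) (hC : IsSetPartition m C) :
    IsSetPartition (k + m) (concatP k B C) := by
  have hshift : ∀ D ∈ shiftP k C, ∀ x ∈ D, k + 1 ≤ x ∧ x ≤ k + m := by
    intro D hD x hx
    obtain ⟨B0, hB0, rfl⟩ := shift_block_mem.mp hD
    obtain ⟨y, hy, rfl⟩ := Finset.mem_image.mp hx
    have := mem_ground'.mp (part_subset_ground hC hB0 hy)
    omega
  refine ⟨?_, ?_, ?_⟩
  · intro D hD
    rcases Finset.mem_union.mp hD with h | h
    · exact hB.1 _ h
    · obtain ⟨B0, hB0, rfl⟩ := shift_block_mem.mp h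
      exact (hC.1 _ hB0).image _
  · intro D hD E hE hne
    rcases Finset.mem_union.mp hD with h1 | h1 <;> rcases Finset.mem_union.mp hE with h2 | h2
    · exact hB.2.1 _ h1 _ h2 hne
    · rw [Finset.disjoint_left]
      intro x hxD hxE
      have h1' := mem_ground'.mp (part_subset_ground hB h1 hxD)
      have := hshift _ h2 x hxE
      omega
    · rw [Finset.disjoint_left]
      intro x hxD hxE
      have h2' := mem_ground'.mp (part_subset_ground hB h2 hxE)
      have := hshift _ h1 x hxD
      omega
    · obtain ⟨B1, hB1, rfl⟩ := shift_block_mem.mp h1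
      obtain ⟨B2, hB2, rfl⟩ := shift_block_mem.mp h2
      have hne' : B1 ≠ B2 := by rintro rfl; exact hne rfl
      exact Finset.disjoint_image (add_left_injective k) |>.mpr (hC.2.1 _ hB1 _ hB2 hne')
  · apply Finset.ext
    intro x
    rw [Finset.mem_sup]
    constructor
    · rintro ⟨D, hD, hx⟩
      simp only [id] at hx
      rcases Finset.mem_union.mp hD with h | h
      · have := mem_ground'.mp (part_subset_ground hB h hx)
        exact mem_ground'.mpr ⟨this.1, by omega⟩
      · have := hshift _ h x hx
        exact mem_ground'.mpr ⟨by omega, this.2⟩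
    · intro hx
      have hx' := mem_ground'.mp hx
      by_cases hxk : x ≤ k
      · obtain ⟨D, hD, hxD⟩ := exists_block hB (mem_ground'.mpr ⟨hx'.1, hxk⟩)
        exact ⟨D, Finset.mem_union_left _ hD, hxD⟩
      · obtain ⟨D, hD, hxD⟩ := exists_block hC (x := x - k) (mem_ground'.mpr ⟨by omega, by omega⟩)
        refine ⟨D.image (· + k), Finset.mem_union_right _ (shift_block_mem.mpr ⟨D, hD, rfl⟩), ?_⟩
        simp only [id, Finset.mem_image]
        exact ⟨x - k, hxD, by omega⟩

lemma concatP_card {k m : ℕ} {B C : Finset (Finset ℕ)}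
    (hB : IsSetPartition k B) (hC : IsSetPartition m C) :
    (concatP k B C).card = B.card + C.card := by
  have hdisj : Disjoint B (shiftP k C) := by
    rw [Finset.disjoint_left]
    intro D hD hD'
    obtain ⟨B0, hB0, rfl⟩ := shift_block_mem.mp hD'
    obtain ⟨y, hy⟩ := hC.1 _ hB0
    have hyk : y + k ∈ B0.image (· + k) := Finset.mem_image.mpr ⟨y, hy, rfl⟩
    have h1 := mem_ground'.mp (part_subset_ground hB hD hyk)
    have h2 := mem_ground'.mp (part_subset_ground hC hB0 hy)
    omega
  rw [concatP, Finset.card_union_of_disjoint hdisj, shiftP,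
    Finset.card_image_of_injective _ (Finset.image_injective (add_left_injective k))]

lemma split_spec {n k : ℕ} {A : Finset (Finset ℕ)} (hA : IsSetPartition n A)
    (hkn : k ≤ n) (hbrk : IsBreak k A) :
    IsSetPartition k (firstPart k A) ∧ IsSetPartition (n - k) (restPart k A) ∧
    A = concatP k (firstPart k A) (restPart k A) ∧
    (firstPart k A).card + (restPart k A).card = A.card := by
  have hrest_src : ∀ D ∈ A.filter (fun B => ¬ B ⊆ ground k), ∀ x ∈ D, k < x ∧ x ≤ n := by
    intro D hD x hx
    rw [Finset.mem_filter] at hD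
    rcases hbrk D hD.1 with h | h
    · exact absurd h hD.2
    · exact ⟨h x hx, (mem_ground'.mp (part_subset_ground hA hD.1 hx)).2⟩
  have hfirst : IsSetPartition k (firstPart k A) := by
    refine ⟨fun D hD => hA.1 _ (Finset.mem_of_mem_filter _ hD), ?_, ?_⟩
    · intro D hD E hE hne
      exact hA.2.1 _ (Finset.mem_of_mem_filter _ hD) _ (Finset.mem_of_mem_filter _ hE) hne
    · apply Finset.ext
      intro x
      rw [Finset.mem_sup]
      constructor
      · rintro ⟨D, hD, hx⟩
        exact (Finset.mem_filter.mp hD).2 hx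
      · intro hx
        have hx' := mem_ground'.mp hx
        obtain ⟨D, hD, hxD⟩ := exists_block hA (mem_ground'.mpr ⟨hx'.1, hx'.2.trans hkn⟩)
        refine ⟨D, Finset.mem_filter.mpr ⟨hD, ?_⟩, hxD⟩
        rcases hbrk D hD with h | h
        · exact h
        · exact absurd (h x hxD) (by omega)
  have himg_inj : ∀ D ∈ A.filter (fun B => ¬ B ⊆ ground k),
      (D.image (· - k)).image (· + k) = D := by
    intro D hD
    rw [Finset.image_image]
    rw [show ((· + k) ∘ (· - k) : ℕ → ℕ) = fun x => x - k + k from rfl]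
    apply Finset.ext
    intro x
    simp only [Finset.mem_image]
    constructor
    · rintro ⟨y, hy, rfl⟩
      have := hrest_src D hD y hy
      have : y - k + k = y := by omega
      rwa [this]
    · intro hx
      exact ⟨x, hx, by have := hrest_src D hD x hx; omega⟩
  have hrest : IsSetPartition (n - k) (restPart k A) := by
    refine ⟨?_, ?_, ?_⟩
    · intro D hD
      obtain ⟨B0, hB0, rfl⟩ := Finset.mem_image.mp hD
      exact (hA.1 _ (Finset.mem_of_mem_filter _ hB0)).image _
    · intro D hD E hE hne
      obtain ⟨B1, hB1, rfl⟩ := Finset.mem_image.mp hD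
      obtain ⟨B2, hB2, rfl⟩ := Finset.mem_image.mp hE
      have hne' : B1 ≠ B2 := by rintro rfl; exact hne rfl
      have hdisj := hA.2.1 _ (Finset.mem_of_mem_filter _ hB1) _ (Finset.mem_of_mem_filter _ hB2) hne'
      rw [Finset.disjoint_left]
      intro x hx1 hx2
      obtain ⟨a, ha, rfl⟩ := Finset.mem_image.mp hx1
      obtain ⟨b, hb, hab⟩ := Finset.mem_image.mp hx2
      have h1 := hrest_src _ hB1 a ha
      have h2 := hrest_src _ hB2 b hb
      have : a = b := by omega
      subst this
      exact Finset.disjoint_left.mp hdisj ha hb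
    · apply Finset.ext
      intro x
      rw [Finset.mem_sup]
      constructor
      · rintro ⟨D, hD, hx⟩
        simp only [id] at hx
        obtain ⟨B0, hB0, rfl⟩ := Finset.mem_image.mp hD
        obtain ⟨y, hy, rfl⟩ := Finset.mem_image.mp hx
        have := hrest_src _ hB0 y hy
        exact mem_ground'.mpr ⟨by omega, by omega⟩
      · intro hx
        have hx' := mem_ground'.mp hx
        obtain ⟨D, hD, hxD⟩ := exists_block hA (x := x + k) (mem_ground'.mpr ⟨by omega, by omega⟩)
        have hDnot : ¬ D ⊆ ground k := by
          intro hsub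
          have := mem_ground'.mp (hsub hxD)
          omega
        refine ⟨D.image (· - k), Finset.mem_image.mpr
          ⟨D, Finset.mem_filter.mpr ⟨hD, hDnot⟩, rfl⟩, ?_⟩
        simp only [id, Finset.mem_image]
        exact ⟨x + k, hxD, by omega⟩
  have hconcat : A = concatP k (firstPart k A) (restPart k A) := by
    have hshift_eq : shiftP k (restPart k A) = A.filter (fun B => ¬ B ⊆ ground k) := by
      rw [shiftP, restPart, Finset.image_image]
      apply Finset.ext
      intro D
      simp only [Finset.mem_image, Function.comp]
      constructor
      · rintro ⟨B0, hB0, rfl⟩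
        rw [himg_inj _ hB0]
        exact hB0
      · intro hD
        exact ⟨D, hD, himg_inj _ hD⟩
    rw [concatP, hshift_eq, firstPart, Finset.filter_union_filter_not_eq]
  have hcard : (firstPart k A).card + (restPart k A).card = A.card := by
    have : (restPart k A).card = (A.filter (fun B => ¬ B ⊆ ground k)).card := by
      apply Finset.card_image_of_injOn
      intro D1 h1 D2 h2 heq
      have := congrArg (Finset.image (· + k)) heq
      rwa [himg_inj _ (by simpa using h1), himg_inj _ (by simpa using h2)] at this
    rw [this, firstPart, Finset.card_filter_add_card_filter_not]
  exact ⟨hfirst, hrest, hconcat, hcard⟩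

lemma concat_split {k m : ℕ} {B C : Finset (Finset ℕ)}
    (hB : IsSetPartition k B) (hC : IsSetPartition m C) :
    IsBreak k (concatP k B C) ∧ firstPart k (concatP k B C) = B ∧
    restPart k (concatP k B C) = C := by
  have hshift : ∀ D ∈ shiftP k C, (∀ x ∈ D, k < x) ∧ D.Nonempty := by
    intro D hD
    obtain ⟨B0, hB0, rfl⟩ := shift_block_mem.mp hD
    constructor
    · intro x hx
      obtain ⟨y, hy, rfl⟩ := Finset.mem_image.mp hx
      have := mem_ground'.mp (part_subset_ground hC hB0 hy)
      omega
    · exact (hC.1 _ hB0).image _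
  have hbrk : IsBreak k (concatP k B C) := by
    intro D hD
    rcases Finset.mem_union.mp hD with h | h
    · exact Or.inl (part_subset_ground hB h)
    · exact Or.inr (hshift _ h).1
  have hfirst : firstPart k (concatP k B C) = B := by
    rw [firstPart, concatP, Finset.filter_union]
    have h1 : B.filter (· ⊆ ground k) = B :=
      Finset.filter_true_of_mem fun D hD => part_subset_ground hB hD
    have h2 : (shiftP k C).filter (· ⊆ ground k) = ∅ := by
      apply Finset.filter_false_of_mem
      intro D hD hsub
      obtain ⟨x, hx⟩ := (hshift _ hD).2
      have := mem_ground'.mp (hsub hx)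
      have := (hshift _ hD).1 x hx
      omega
    rw [h1, h2, Finset.union_empty]
  have hrest : restPart k (concatP k B C) = C := by
    rw [restPart, concatP, Finset.filter_union]
    have h1 : B.filter (fun D => ¬ D ⊆ ground k) = ∅ := by
      apply Finset.filter_false_of_mem
      intro D hD hsub
      exact hsub (part_subset_ground hB hD)
    have h2 : (shiftP k C).filter (fun D => ¬ D ⊆ ground k) = shiftP k C := by
      apply Finset.filter_true_of_mem
      intro D hD hsub
      obtain ⟨x, hx⟩ := (hshift _ hD).2
      have := mem_ground'.mp (hsub hx)
      have := (hshift _ hD).1 x hx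
      omega
    rw [h1, h2, Finset.empty_union, shiftP, Finset.image_image]
    apply Finset.ext
    intro D
    simp only [Finset.mem_image, Function.comp]
    constructor
    · rintro ⟨B0, hB0, rfl⟩
      have : (B0.image (· + k)).image (· - k) = B0 := by
        rw [Finset.image_image]
        have : ((· - k) ∘ (· + k) : ℕ → ℕ) = id := by
          funext x; simp
        rw [this, Finset.image_id]
      rw [this]; exact hB0
    · intro hD
      refine ⟨D, hD, ?_⟩
      rw [Finset.image_image]
      have : ((· - k) ∘ (· + k) : ℕ → ℕ) = id := by funext x; simp
      rw [this, Finset.image_id]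
  exact ⟨hbrk, hfirst, hrest⟩

end AuxProof
section AuxProof2
open Finset

lemma atomic_iff {n : ℕ} {A : Finset (Finset ℕ)} (hA : IsSetPartition n A) (hn : 0 < n) :
    AtomicP n A ↔ ∀ j, 0 < j → j < n → ¬ IsBreak j A := by
  constructor
  · rintro ⟨-, -, hno⟩ j hj1 hj2 hbrk
    obtain ⟨h1, h2, h3, -⟩ := split_spec hA (le_of_lt hj2) hbrk
    exact hno ⟨j, _, _, hj1, hj2, h1, h2, h3⟩
  · intro h
    refine ⟨hA, hn, ?_⟩
    rintro ⟨k, B, C, hk1, hk2, hB, hC, rfl⟩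
    exact h k hk1 hk2 (concat_split hB hC).1

def Brks (n : ℕ) (A : Finset (Finset ℕ)) : Finset ℕ :=
  (Finset.Icc 1 n).filter (fun k => IsBreak k A)

lemma n_mem_Brks {n : ℕ} {A : Finset (Finset ℕ)} (hA : IsSetPartition n A) (hn : 0 < n) :
    n ∈ Brks n A := by
  refine Finset.mem_filter.mpr ⟨Finset.mem_Icc.mpr ⟨hn, le_rfl⟩, ?_⟩
  intro B hB
  exact Or.inl (part_subset_ground hA hB)

def minBrk (n : ℕ) (A : Finset (Finset ℕ)) : ℕ :=
  if h : (Brks n A).Nonempty then (Brks n A).min' h else 0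

lemma minBrk_spec {n : ℕ} {A : Finset (Finset ℕ)} (hA : IsSetPartition n A) (hn : 0 < n) :
    1 ≤ minBrk n A ∧ minBrk n A ≤ n ∧ IsBreak (minBrk n A) A ∧
      ∀ j ∈ Brks n A, minBrk n A ≤ j := by
  have hne : (Brks n A).Nonempty := ⟨n, n_mem_Brks hA hn⟩
  rw [minBrk, dif_pos hne]
  have hmem := (Brks n A).min'_mem hne
  simp only [Brks, Finset.mem_filter, Finset.mem_Icc] at hmem
  exact ⟨hmem.1.1, hmem.1.2, hmem.2, fun j hj => Finset.min'_le _ _ hj⟩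

lemma first_atomic {n : ℕ} {A : Finset (Finset ℕ)} (hA : IsSetPartition n A) (hn : 0 < n) :
    AtomicP (minBrk n A) (firstPart (minBrk n A) A) := by
  obtain ⟨h1, h2, h3, h4⟩ := minBrk_spec hA hn
  obtain ⟨hfirst, -, -, -⟩ := split_spec hA h2 h3
  rw [atomic_iff hfirst h1]
  intro j hj1 hj2 hbrk
  -- lift break of firstPart to break of A
  have hbrkA : IsBreak j A := by
    intro D hD
    rcases h3 D hD with hsub | hgt
    · exact hbrk D (Finset.mem_filter.mpr ⟨hD, hsub⟩)
    · exact Or.inr fun x hx => lt_of_le_of_lt (by omega : j ≤ minBrk n A) (hgt x hx)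
  have : minBrk n A ≤ j := h4 j (Finset.mem_filter.mpr
    ⟨Finset.mem_Icc.mpr ⟨hj1, by omega⟩, hbrkA⟩)
  omega

lemma minBrk_concat {k m : ℕ} {B C : Finset (Finset ℕ)}
    (hB : AtomicP k B) (hC : IsSetPartition m C) :
    minBrk (k + m) (concatP k B C) = k := by
  have hBp := hB.1; have hk := hB.2.1
  have hA : IsSetPartition (k + m) (concatP k B C) := concatP_isSetPartition hBp hC
  obtain ⟨h1, h2, h3, h4⟩ := minBrk_spec hA (by omega)
  have hk_mem : k ∈ Brks (k + m) (concatP k B C) := Finset.mem_filter.mpr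
    ⟨Finset.mem_Icc.mpr ⟨hk, by omega⟩, (concat_split hBp hC).1⟩
  have hle : minBrk (k + m) (concatP k B C) ≤ k := h4 _ hk_mem
  by_contra hne
  have hlt : minBrk (k + m) (concatP k B C) < k := by omega
  -- break of concat below k restricts to break of B
  have hbrkB : IsBreak (minBrk (k + m) (concatP k B C)) B := by
    intro D hD
    exact h3 D (Finset.mem_union_left _ hD)
  exact (atomic_iff hBp hk).mp hB _ h1 hlt hbrkB

end AuxProof2
section AuxProof3
open Finset

def SPF (n r : ℕ) : Finset (Finset (Finset ℕ)) :=
  ((ground n).powerset.powerset).filter fun A => IsSetPartition n A ∧ A.card = r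

def ATF (k i : ℕ) : Finset (Finset (Finset ℕ)) :=
  ((ground k).powerset.powerset).filter fun A => AtomicP k A ∧ A.card = i

lemma mem_SPF {n r : ℕ} {A : Finset (Finset ℕ)} :
    A ∈ SPF n r ↔ IsSetPartition n A ∧ A.card = r := by
  rw [SPF, Finset.mem_filter, and_iff_right_iff_imp]
  intro h
  rw [Finset.mem_powerset]
  intro B hB
  rw [Finset.mem_powerset]
  exact part_subset_ground h.1 hB

lemma mem_ATF {k i : ℕ} {A : Finset (Finset ℕ)} :
    A ∈ ATF k i ↔ AtomicP k A ∧ A.card = i := by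
  rw [ATF, Finset.mem_filter, and_iff_right_iff_imp]
  intro h
  rw [Finset.mem_powerset]
  intro B hB
  rw [Finset.mem_powerset]
  exact part_subset_ground h.1.1 hB

lemma stirling2_eq (n r : ℕ) : stirling2 n r = (SPF n r).card := by
  have hset : {A : Finset (Finset ℕ) | IsSetPartition n A ∧ A.card = r} = ↑(SPF n r) := by
    ext A
    simp [mem_SPF]
  calc Nat.card {A : Finset (Finset ℕ) // IsSetPartition n A ∧ A.card = r}
      = Set.ncard {A : Finset (Finset ℕ) | IsSetPartition n A ∧ A.card = r} :=
        Nat.card_coe_set_eq _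
    _ = ((SPF n r : Set (Finset (Finset ℕ)))).ncard := by rw [hset]
    _ = (SPF n r).card := Set.ncard_coe_finset _

lemma atomCount_eq (k i : ℕ) : atomCount k i = (ATF k i).card := by
  have hset : {A : Finset (Finset ℕ) | AtomicP k A ∧ A.card = i} = ↑(ATF k i) := by
    ext A
    simp [mem_ATF]
  calc Nat.card {A : Finset (Finset ℕ) // AtomicP k A ∧ A.card = i}
      = Set.ncard {A : Finset (Finset ℕ) | AtomicP k A ∧ A.card = i} :=
        Nat.card_coe_set_eq _
    _ = ((ATF k i : Set (Finset (Finset ℕ)))).ncard := by rw [hset]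
    _ = (ATF k i).card := Set.ncard_coe_finset _

lemma partition_zero {A : Finset (Finset ℕ)} (h : IsSetPartition 0 A) : A = ∅ := by
  rw [Finset.eq_empty_iff_forall_notMem]
  intro B hB
  obtain ⟨x, hx⟩ := h.1 _ hB
  have := part_subset_ground h hB hx
  simp [ground] at this

lemma empty_partition_zero : IsSetPartition 0 (∅ : Finset (Finset ℕ)) := by
  refine ⟨by simp, by simp, ?_⟩
  simp [ground]

lemma stirling2_zero_zero : stirling2 0 0 = 1 := by
  rw [stirling2_eq]
  have : SPF 0 0 = {∅} := by
    apply Finset.ext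
    intro A
    rw [mem_SPF, Finset.mem_singleton]
    constructor
    · rintro ⟨h, -⟩
      exact partition_zero h
    · rintro rfl
      exact ⟨empty_partition_zero, rfl⟩
  rw [this, Finset.card_singleton]

lemma stirling2_zero_pos {r : ℕ} (hr : r ≠ 0) : stirling2 0 r = 0 := by
  rw [stirling2_eq]
  have : SPF 0 r = ∅ := by
    rw [Finset.eq_empty_iff_forall_notMem]
    intro A hA
    rw [mem_SPF] at hA
    rw [partition_zero hA.1] at hA
    simp at hA
    omega
  rw [this, Finset.card_empty]

set_option maxHeartbeats 1000000 in
lemma stirling2_rec {n : ℕ} (hn : 0 < n) (r : ℕ) :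
    stirling2 n r =
      ∑ p ∈ (Finset.range (r + 1)) ×ˢ (Finset.range (n + 1)),
        (if p.2 = 0 then 0 else atomCount p.2 p.1 * stirling2 (n - p.2) (r - p.1)) := by
  rw [stirling2_eq]
  have hmap : ∀ A ∈ SPF n r,
      ((firstPart (minBrk n A) A).card, minBrk n A) ∈
        (Finset.range (r + 1)) ×ˢ (Finset.range (n + 1)) := by
    intro A hA
    rw [mem_SPF] at hA
    obtain ⟨h1, h2, h3, h4⟩ := minBrk_spec hA.1 hn
    rw [Finset.mem_product, Finset.mem_range, Finset.mem_range]
    constructor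
    · have : (firstPart (minBrk n A) A).card ≤ A.card :=
        Finset.card_le_card (Finset.filter_subset _ _)
      omega
    · omega
  rw [Finset.card_eq_sum_card_fiberwise hmap]
  apply Finset.sum_congr rfl
  rintro ⟨i, k⟩ hp
  rw [Finset.mem_product, Finset.mem_range, Finset.mem_range] at hp
  by_cases hk : k = 0
  · subst hk
    have h0 : (Finset.filter (fun a => ((firstPart (minBrk n a) a).card, minBrk n a) = (i, 0))
        (SPF n r)) = ∅ := by
      rw [Finset.eq_empty_iff_forall_notMem]
      rintro A hA
      rw [Finset.mem_filter, mem_SPF] at hA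
      obtain ⟨⟨hA1, -⟩, heq⟩ := hA
      have := (minBrk_spec hA1 hn).1
      have := congrArg Prod.snd heq
      simp at this
      omega
    rw [h0]
    simp
  · rw [if_neg hk, atomCount_eq, stirling2_eq, ← Finset.card_product]
    apply Finset.card_nbij' (i := fun A => (firstPart k A, restPart k A))
      (j := fun q => concatP k q.1 q.2)
    · -- forward maps into product
      intro A hA
      rw [Finset.mem_coe, Finset.mem_filter, mem_SPF] at hA
      obtain ⟨⟨hA1, hAr⟩, heq⟩ := hA
      have hik : (firstPart (minBrk n A) A).card = i ∧ minBrk n A = k := by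
        constructor
        · exact congrArg Prod.fst heq
        · exact congrArg Prod.snd heq
      obtain ⟨hi, hkeq⟩ := hik
      subst hkeq
      obtain ⟨h1, h2, h3, h4⟩ := minBrk_spec hA1 hn
      obtain ⟨hf, hr, hc, hcard⟩ := split_spec hA1 h2 h3
      rw [Finset.mem_coe, Finset.mem_product, mem_ATF, mem_SPF]
      refine ⟨⟨first_atomic hA1 hn, hi⟩, hr, ?_⟩
      show (restPart (minBrk n A) A).card = r - i
      omega
    · -- backward maps into fiber
      rintro ⟨B, C⟩ hq
      rw [Finset.mem_coe, Finset.mem_product, mem_ATF, mem_SPF] at hq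
      obtain ⟨⟨hBat, hBc⟩, hCp, hCc⟩ := hq
      have hBp := hBat.1
      have hkn : k + (n - k) = n := by omega
      have hpart : IsSetPartition n (concatP k B C) := by
        have := concatP_isSetPartition hBp hCp
        rwa [hkn] at this
      have hcard : (concatP k B C).card = r := by
        rw [concatP_card hBp hCp, hBc, hCc]
        omega
      have hmin : minBrk n (concatP k B C) = k := by
        have := minBrk_concat hBat hCp
        rwa [hkn] at this
      rw [Finset.mem_coe, Finset.mem_filter, mem_SPF, hmin]
      refine ⟨⟨hpart, hcard⟩, ?_⟩
      rw [(concat_split hBp hCp).2.1, hBc]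
    · -- left inverse
      intro A hA
      rw [Finset.mem_coe, Finset.mem_filter, mem_SPF] at hA
      obtain ⟨⟨hA1, hAr⟩, heq⟩ := hA
      have hkeq : minBrk n A = k := congrArg Prod.snd heq
      subst hkeq
      obtain ⟨h1, h2, h3, h4⟩ := minBrk_spec hA1 hn
      exact (split_spec hA1 h2 h3).2.2.1.symm
    · -- right inverse
      rintro ⟨B, C⟩ hq
      rw [Finset.mem_coe, Finset.mem_product, mem_ATF, mem_SPF] at hq
      obtain ⟨⟨hBat, hBc⟩, hCp, hCc⟩ := hq
      have h := concat_split hBat.1 hCp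
      rw [Prod.mk.injEq]
      exact ⟨h.2.1, h.2.2⟩

end AuxProof3
section AuxProof4
open Finset

def mk2 (a b : ℕ) : Fin 2 →₀ ℕ := Finsupp.single 0 a + Finsupp.single 1 b

lemma mk2_apply0 (a b : ℕ) : mk2 a b 0 = a := by
  simp [mk2, Finsupp.single_apply]

lemma mk2_apply1 (a b : ℕ) : mk2 a b 1 = b := by
  simp [mk2, Finsupp.single_apply]

lemma finsupp_fin2_ext {u v : Fin 2 →₀ ℕ} (h0 : u 0 = v 0) (h1 : u 1 = v 1) : u = v := by
  ext a
  fin_cases a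
  · exact h0
  · exact h1

lemma sum_antidiag_eq (d : Fin 2 →₀ ℕ) :
    ∑ p ∈ Finset.HasAntidiagonal.antidiagonal d,
        ((if p.1 1 = 0 then (0 : ℚ) else (atomCount (p.1 1) (p.1 0) : ℚ)) *
          (stirling2 (p.2 1) (p.2 0) : ℚ)) =
      ∑ p ∈ Finset.range (d 0 + 1) ×ˢ Finset.range (d 1 + 1),
        ((if p.2 = 0 then 0 else atomCount p.2 p.1 * stirling2 (d 1 - p.2) (d 0 - p.1) : ℕ) : ℚ) := by
  have key : ∀ p : (Fin 2 →₀ ℕ) × (Fin 2 →₀ ℕ), p ∈ Finset.HasAntidiagonal.antidiagonal d →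
      p.1 0 + p.2 0 = d 0 ∧ p.1 1 + p.2 1 = d 1 := by
    intro p hp
    rw [Finset.HasAntidiagonal.mem_antidiagonal] at hp
    constructor
    · rw [← hp]; simp
    · rw [← hp]; simp
  apply Finset.sum_nbij' (i := fun p => (p.1 0, p.1 1))
    (j := fun q => (mk2 q.1 q.2, mk2 (d 0 - q.1) (d 1 - q.2)))
  · intro p hp
    obtain ⟨h0, h1⟩ := key p hp
    rw [Finset.mem_product, Finset.mem_range, Finset.mem_range]
    omega
  · intro q hq
    rw [Finset.mem_product, Finset.mem_range, Finset.mem_range] at hq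
    rw [Finset.HasAntidiagonal.mem_antidiagonal]
    apply finsupp_fin2_ext
    · rw [Finsupp.add_apply, mk2_apply0, mk2_apply0]; omega
    · rw [Finsupp.add_apply, mk2_apply1, mk2_apply1]; omega
  · intro p hp
    obtain ⟨h0, h1⟩ := key p hp
    rw [Prod.mk.injEq]
    constructor
    · exact finsupp_fin2_ext (mk2_apply0 _ _) (mk2_apply1 _ _)
    · apply finsupp_fin2_ext
      · rw [mk2_apply0]; omega
      · rw [mk2_apply1]; omega
  · intro q hq
    rw [Prod.mk.injEq]
    exact ⟨mk2_apply0 _ _, mk2_apply1 _ _⟩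
  · intro p hp
    obtain ⟨h0, h1⟩ := key p hp
    have h20 : p.2 0 = d 0 - p.1 0 := by omega
    have h21 : p.2 1 = d 1 - p.1 1 := by omega
    show _ = ((if p.1 1 = 0 then 0
        else atomCount (p.1 1) (p.1 0) * stirling2 (d 1 - p.1 1) (d 0 - p.1 0) : ℕ) : ℚ)
    rw [h20, h21]
    split_ifs with h
    · simp
    · push_cast; ring

end AuxProof4
/-- with `t` the first variable and `q` the second,
`1/(1 - ∑_{k ≥ 1} ∑_i a_{k,i} t^i q^k) = ∑_{n,r} S_{n,r} t^r q^n`, i.e. the two series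
multiply to `1`. -/
theorem atomic_generating_function :
    (1 - (show MvPowerSeries (Fin 2) ℚ from
        fun d => if d 1 = 0 then (0 : ℚ) else (atomCount (d 1) (d 0) : ℚ))) *
      (show MvPowerSeries (Fin 2) ℚ from fun d => (stirling2 (d 1) (d 0) : ℚ)) = 1 := by
  apply MvPowerSeries.ext
  intro d
  rw [sub_mul, one_mul, map_sub, MvPowerSeries.coeff_mul, MvPowerSeries.coeff_one]
  show (stirling2 (d 1) (d 0) : ℚ) -
      (∑ p ∈ Finset.HasAntidiagonal.antidiagonal d,
        ((if p.1 1 = 0 then (0 : ℚ) else (atomCount (p.1 1) (p.1 0) : ℚ)) *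
          (stirling2 (p.2 1) (p.2 0) : ℚ))) = if d = 0 then 1 else 0
  by_cases hd : d = 0
  · subst hd
    rw [if_pos rfl, Finsupp.antidiagonal_zero, Finset.sum_singleton]
    simp [stirling2_zero_zero]
  · rw [if_neg hd, sub_eq_zero]
    by_cases hn : d 1 = 0
    · have hd0 : d 0 ≠ 0 := by
        intro h0
        exact hd (finsupp_fin2_ext h0 hn)
      rw [hn, stirling2_zero_pos hd0, Nat.cast_zero]
      symm
      apply Finset.sum_eq_zero
      intro p hp
      rw [Finset.HasAntidiagonal.mem_antidiagonal] at hp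
      have h1 : p.1 1 + p.2 1 = d 1 := by rw [← hp]; simp
      rw [if_pos (by omega), zero_mul]
    · rw [sum_antidiag_eq, stirling2_rec (Nat.pos_of_ne_zero hn) (d 0), Nat.cast_sum]

end
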